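/- Let ν be an invariant probability measure for m. Then ν is ergodic (i.e., every Borel set B with m_x(B) = 1 for all x ∈ B satisfies ν(B) ∈ {0,1}) if and only if the space is m-connected (i.e., ν(N^m_D) = 0 for every D with ν(D) > 0). -/

import Mathlib

open MeasureTheory

/-- The `n`-step convolution of a random walk. -/
noncomputable def iterRW {X : Type*} [MeasurableSpace X] (m : X → Measure X) :
    ℕ → X → Measure X
  | 0 => fun x => Measure.dirac x
  | n + 1 => fun x => (iterRW m n x).bind m

/-- The set `N^m_D = {x : m_x^{*n}(D) = 0 for all n ≥ 1}`. -/
def NSet {X : Type*} [MeasurableSpace X] (m : X → Measure X) (D : Set X) : Set X :=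
  {x : X | ∀ n : ℕ, 1 ≤ n → iterRW m n x D = 0}

section Aux

variable {X : Type*} [MeasurableSpace X] {m : X → Measure X}

lemma iterRW_measurable (hm : Measurable m) : ∀ n, Measurable (iterRW m n)
  | 0 => Measure.measurable_dirac
  | n + 1 => (Measure.measurable_bind' hm).comp (iterRW_measurable hm n)

lemma iterRW_prob (hm : Measurable m) (hprob : ∀ x, IsProbabilityMeasure (m x)) :
    ∀ n x, IsProbabilityMeasure (iterRW m n x)
  | 0, x => by simpa [iterRW] using Measure.dirac.isProbabilityMeasure
  | n + 1, x => by
    have := iterRW_prob hm hprob n x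
    constructor
    rw [show iterRW m (n + 1) x = (iterRW m n x).bind m from rfl,
      Measure.bind_apply MeasurableSet.univ hm.aemeasurable]
    simp [(hprob _).measure_univ]

lemma iterRW_succ' (hm : Measurable m) :
    ∀ n x, iterRW m (n + 1) x = (m x).bind (iterRW m n)
  | 0, x => by
    rw [show iterRW m 1 x = (Measure.dirac x).bind m from rfl, Measure.dirac_bind hm]
    simp [iterRW, Measure.bind_dirac]
  | n + 1, x => by
    rw [show iterRW m (n + 2) x = (iterRW m (n + 1) x).bind m from rfl, iterRW_succ' hm n x,
      Measure.bind_bind (iterRW_measurable hm n).aemeasurable hm.aemeasurable]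
    rfl

end Aux

/-- Let `ν` be an invariant probability measure for `m`. Then `ν` is ergodic (every Borel set
`B` with `m_x(B) = 1` for all `x ∈ B` satisfies `ν(B) ∈ {0,1}`) if and only if the space is
`m`-connected (`ν(N^m_D) = 0` for every measurable `D` with `ν(D) > 0`). -/
theorem ergodic_iff_mConnected {X : Type*} [MeasurableSpace X]
    (ν : Measure X) [IsProbabilityMeasure ν] (m : X → Measure X)
    (hm : Measurable m) (hprob : ∀ x, IsProbabilityMeasure (m x))
    (hinv : ν.bind m = ν) :
    (∀ B : Set X, MeasurableSet B → (∀ x ∈ B, m x B = 1) → ν B = 0 ∨ ν B = 1) ↔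
      (∀ D : Set X, MeasurableSet D → 0 < ν D → ν (NSet m D) = 0) := by
  constructor
  · intro herg D hD hDpos
    set N := NSet m D with hNdef
    have hfun : ∀ n : ℕ, Measurable fun x => iterRW m n x D :=
      fun n => (Measure.measurable_coe hD).comp (iterRW_measurable hm n)
    have hNmeas : MeasurableSet N := by
      have : N = ⋂ n : ℕ, ⋂ _ : 1 ≤ n, {x | iterRW m n x D = 0} := by
        ext x; simp [hNdef, NSet, Set.mem_iInter]
      rw [this]
      exact MeasurableSet.iInter fun n => MeasurableSet.iInter fun _ =>
        (hfun n) (measurableSet_singleton 0)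
    -- N is invariant
    have hNinv : ∀ x ∈ N, m x N = 1 := by
      intro x hx
      have := hprob x
      have hcompl : Nᶜ = ⋃ n : ℕ, {y | iterRW m (n + 1) y D ≠ 0} := by
        ext y
        simp only [hNdef, NSet, Set.mem_compl_iff, Set.mem_setOf_eq, not_forall,
          Set.mem_iUnion]
        constructor
        · rintro ⟨n, hn, h⟩
          obtain ⟨k, rfl⟩ := Nat.exists_eq_add_of_le hn
          exact ⟨k, by simpa [Nat.add_comm] using h⟩
        · rintro ⟨k, h⟩
          exact ⟨k + 1, Nat.le_add_left 1 k, h⟩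
      have hzero : ∀ k : ℕ, m x {y | iterRW m k y D ≠ 0} = 0 := by
        intro k
        have hint : ∫⁻ y, iterRW m k y D ∂(m x) = 0 := by
          rw [← Measure.bind_apply hD (iterRW_measurable hm k).aemeasurable, ← iterRW_succ' hm k x]
          exact hx (k + 1) (Nat.le_add_left 1 k)
        have := (lintegral_eq_zero_iff (hfun k)).mp hint
        simpa [Filter.EventuallyEq, ae_iff] using this
      rw [show m x N = 1 ↔ m x Nᶜ = 0 from (prob_compl_eq_zero_iff hNmeas).symm, hcompl]
      exact measure_iUnion_null fun k => hzero (k + 1)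
    rcases herg N hNmeas hNinv with h0 | h1
    · exact h0
    · exfalso
      have := (prob_compl_eq_zero_iff hNmeas).mpr h1
      have hDzero : ν D = 0 := by
        rw [← hinv, Measure.bind_apply hD hm.aemeasurable]
        have hae : (fun x => m x D) =ᵐ[ν] 0 := by
          refine measure_mono_null ?_ this
          intro x hx
          simp only [Set.mem_compl_iff, hNdef, NSet, Set.mem_setOf_eq]
          intro hN
          have h1x := hN 1 le_rfl
          rw [show iterRW m 1 x = (Measure.dirac x).bind m from rfl,
            Measure.dirac_bind hm] at h1x
          exact hx h1x
        rw [lintegral_congr_ae hae]; simp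
      exact absurd hDzero (ne_of_gt hDpos)
  · intro hconn B hB hBinv
    by_contra h
    push_neg at h
    obtain ⟨h0, h1⟩ := h
    have hBpos : 0 < ν B := pos_iff_ne_zero.mpr h0
    have hcpos : 0 < ν Bᶜ := by
      rw [pos_iff_ne_zero]
      intro hc
      exact h1 ((prob_compl_eq_zero_iff hB).mp hc)
    have hNzero := hconn Bᶜ hB.compl hcpos
    -- B ⊆ NSet m Bᶜ
    have hiter : ∀ n : ℕ, ∀ x ∈ B, iterRW m n x B = 1 := by
      intro n
      induction n with
      | zero => intro x hx; simp [iterRW, Measure.dirac_apply' _ hB, Set.indicator_of_mem hx]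
      | succ n ih =>
        intro x hx
        have hp := iterRW_prob hm hprob n x
        rw [show iterRW m (n + 1) x = (iterRW m n x).bind m from rfl,
          Measure.bind_apply hB hm.aemeasurable]
        have hcz : iterRW m n x Bᶜ = 0 := (prob_compl_eq_zero_iff hB).mpr (ih x hx)
        have hae : (fun y => m y B) =ᵐ[iterRW m n x] fun _ => 1 := by
          refine measure_mono_null ?_ hcz
          intro y hy
          simp only [Set.mem_setOf_eq, Set.mem_compl_iff] at *
          intro hyB
          exact hy (hBinv y hyB)
        rw [lintegral_congr_ae hae, lintegral_one, measure_univ]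
    have hsub : B ⊆ NSet m Bᶜ := by
      intro x hx n hn
      have hp := iterRW_prob hm hprob n x
      exact (prob_compl_eq_zero_iff hB).mpr (hiter n x hx)
    exact absurd (le_antisymm (hNzero ▸ measure_mono hsub) zero_le) h0
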